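/- Let Φ : X ⇒ Y be a multi-map between metric spaces with Φ(X) = Y and Φ⁻¹(Y) = X. Suppose 0 < δ < ε and 0 < δ' < ε' are real numbers with ε' ≥ ω_Φ(ε) and δ ≥ ω_{Φ⁻¹}(δ'). Then Θ_δ^ε(X) ≤ Θ_{δ'}^{ε'}(Y), where Θ_δ^ε(X) = sup over x ∈ X of the number of δ-connected components of X contained in the ε-connected component of x. -/

import Mathlib

open Cardinal

universe u v

/-- The `s`-connected component of `x`. -/
def chainComp {X : Type*} [MetricSpace X] (s : ℝ) (x : X) : Set X :=
  {y | Relation.ReflTransGen (fun a b => dist a b ≤ s) x y}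

/-- The image of a set under a multi-map `Φ ⊆ X × Y`. -/
def mImage {X Y : Type*} (Φ : Set (X × Y)) (A : Set X) : Set Y :=
  {y | ∃ a ∈ A, (a, y) ∈ Φ}

/-- `Θ_δ^ε(X)`: the supremum over `x ∈ X` of the number of `δ`-connected components
composing the `ε`-connected component of `x`. -/
noncomputable def Theta (X : Type*) [MetricSpace X] (δ ε : ℝ) : Cardinal :=
  ⨆ x : X, #{C : Set X // ∃ y ∈ chainComp ε x, C = chainComp δ y}

/-- Single step: if `dist a b ≤ ρ` and `v ∈ Φ(a)`, `w ∈ Φ(b)`, then `dist v w ≤ ρ'`. -/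
lemma multiMap_step {X Y : Type*} [MetricSpace X] [MetricSpace Y]
    (Φ : Set (X × Y)) {ρ ρ' : ℝ} (hρ' : 0 ≤ ρ')
    (hosc : ∀ A : Set X, EMetric.diam A ≤ ENNReal.ofReal ρ →
      EMetric.diam (mImage Φ A) ≤ ENNReal.ofReal ρ')
    {a b : X} (hab : dist a b ≤ ρ) {v w : Y}
    (hv : (a, v) ∈ Φ) (hw : (b, w) ∈ Φ) : dist v w ≤ ρ' := by
  have hd : EMetric.diam ({a, b} : Set X) ≤ ENNReal.ofReal ρ := by
    rw [show EMetric.diam ({a, b} : Set X) = edist a b from EMetric.diam_pair, edist_dist]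
    exact ENNReal.ofReal_le_ofReal hab
  have h2 := hosc _ hd
  have hvmem : v ∈ mImage Φ {a, b} := ⟨a, by simp, hv⟩
  have hwmem : w ∈ mImage Φ {a, b} := ⟨b, by simp, hw⟩
  have := (EMetric.edist_le_diam_of_mem hvmem hwmem).trans h2
  exact (edist_le_ofReal hρ').mp this

/-- Chains map to chains under a multi-map with bounded oscillation. -/
lemma multiMap_chain {X Y : Type*} [MetricSpace X] [MetricSpace Y]
    (Φ : Set (X × Y)) (hdom : ∀ x : X, ∃ y : Y, (x, y) ∈ Φ)
    {ρ ρ' : ℝ} (hρ : 0 ≤ ρ) (hρ' : 0 ≤ ρ')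
    (hosc : ∀ A : Set X, EMetric.diam A ≤ ENNReal.ofReal ρ →
      EMetric.diam (mImage Φ A) ≤ ENNReal.ofReal ρ')
    {x z : X} (hxz : z ∈ chainComp ρ x)
    {y w : Y} (hy : (x, y) ∈ Φ) (hw : (z, w) ∈ Φ) :
    w ∈ chainComp ρ' y := by
  unfold chainComp at hxz ⊢
  simp only [Set.mem_setOf_eq] at hxz ⊢
  induction hxz generalizing w with
  | refl =>
      exact Relation.ReflTransGen.single
        (multiMap_step Φ hρ' hosc (by simpa using hρ) hy hw)
  | @tail b c hxb hbc ih =>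
      obtain ⟨v, hv⟩ := hdom b
      exact (ih hv).tail (multiMap_step Φ hρ' hosc hbc hv hw)

lemma chainComp_eq_of_mem {X : Type*} [MetricSpace X] {s : ℝ} {a b : X}
    (h : b ∈ chainComp s a) : chainComp s a = chainComp s b := by
  have hsymm : Symmetric (Relation.ReflTransGen (fun a b : X => dist a b ≤ s)) :=
    by
      haveI : Std.Symm (fun a b : X => dist a b ≤ s) := ⟨fun u v huv => by rwa [dist_comm]⟩
      exact fun u v h => Std.Symm.symm _ _ h
  ext t
  constructor
  · intro ht; exact (hsymm h).trans ht
  · intro ht; exact Relation.ReflTransGen.trans h ht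

/-- Lemma 2: if `Φ : X ⇒ Y` is a surjective multi-map with `Φ⁻¹(Y) = X`,
`0 < δ < ε`, `0 < δ' < ε'`, `ε' ≥ ω_Φ(ε)` and `δ ≥ ω_{Φ⁻¹}(δ')`, then
`Θ_δ^ε(X) ≤ Θ_{δ'}^{ε'}(Y)`. -/
theorem Theta_le_of_multiMap {X : Type u} {Y : Type v} [MetricSpace X] [MetricSpace Y]
    (Φ : Set (X × Y))
    (hdom : ∀ x : X, ∃ y : Y, (x, y) ∈ Φ)
    (hsurj : ∀ y : Y, ∃ x : X, (x, y) ∈ Φ)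
    (δ ε δ' ε' : ℝ) (hδ : 0 < δ) (hδε : δ < ε) (hδ' : 0 < δ') (hδε' : δ' < ε')
    (hoscΦ : ∀ A : Set X, EMetric.diam A ≤ ENNReal.ofReal ε →
      EMetric.diam (mImage Φ A) ≤ ENNReal.ofReal ε')
    (hoscΦinv : ∀ B : Set Y, EMetric.diam B ≤ ENNReal.ofReal δ' →
      EMetric.diam (mImage {p : Y × X | (p.2, p.1) ∈ Φ} B) ≤ ENNReal.ofReal δ) :
    Cardinal.lift.{v} (Theta X δ ε) ≤ Cardinal.lift.{u} (Theta Y δ' ε') := by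
  have hε : (0 : ℝ) ≤ ε := le_of_lt (hδ.trans hδε)
  have hε' : (0 : ℝ) ≤ ε' := le_of_lt (hδ'.trans hδε')
  have hδ0 : (0 : ℝ) ≤ δ := hδ.le
  have hδ'0 : (0 : ℝ) ≤ δ' := hδ'.le
  cases isEmpty_or_nonempty X with
  | inl hX =>
      have : Theta X δ ε = 0 := by
        simp [Theta, ciSup_of_empty]
      simp [this]
  | inr hX =>
      -- key pointwise bound
      have key : ∀ x : X,
          Cardinal.lift.{v} #{C : Set X // ∃ z ∈ chainComp ε x, C = chainComp δ z}
            ≤ Cardinal.lift.{u} (Theta Y δ' ε') := by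
        intro x
        obtain ⟨y0, hy0⟩ := hdom x
        -- build an injection into the components at y0
        have hinj : Nonempty
            ({C : Set X // ∃ z ∈ chainComp ε x, C = chainComp δ z} ↪
             {C : Set Y // ∃ w ∈ chainComp ε' y0, C = chainComp δ' w}) := by
          refine ⟨⟨fun C => ?_, ?_⟩⟩
          · refine ⟨chainComp δ' (hdom C.2.choose).choose,
              (hdom C.2.choose).choose, ?_, rfl⟩
            exact multiMap_chain Φ hdom hε hε' hoscΦ C.2.choose_spec.1 hy0
              (hdom C.2.choose).choose_spec
          · intro C1 C2 h
            simp only [Subtype.mk.injEq] at h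
            set z1 := C1.2.choose with hz1
            set z2 := C2.2.choose with hz2
            set w1 := (hdom z1).choose with hw1
            set w2 := (hdom z2).choose with hw2
            have hw1Φ : (z1, w1) ∈ Φ := (hdom z1).choose_spec
            have hw2Φ : (z2, w2) ∈ Φ := (hdom z2).choose_spec
            have hmem : w2 ∈ chainComp δ' w1 := by
              rw [h]; exact Relation.ReflTransGen.refl
            have hz : z2 ∈ chainComp δ z1 :=
              multiMap_chain {p : Y × X | (p.2, p.1) ∈ Φ} hsurj hδ'0 hδ0
                hoscΦinv hmem hw1Φ hw2Φ
            have e1 : C1.1 = chainComp δ z1 := C1.2.choose_spec.2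
            have e2 : C2.1 = chainComp δ z2 := C2.2.choose_spec.2
            exact Subtype.ext (by rw [e1, e2, chainComp_eq_of_mem hz])
        calc Cardinal.lift.{v} #{C : Set X // ∃ z ∈ chainComp ε x, C = chainComp δ z}
            ≤ Cardinal.lift.{u} #{C : Set Y // ∃ w ∈ chainComp ε' y0, C = chainComp δ' w} :=
              Cardinal.lift_mk_le'.mpr hinj
          _ ≤ Cardinal.lift.{u} (Theta Y δ' ε') := by
              apply Cardinal.lift_le.mpr
              exact le_ciSup (Cardinal.bddAbove_range _) y0
      rw [Theta, Cardinal.lift_iSup (Cardinal.bddAbove_range _)]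
      exact ciSup_le key
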